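/- Let f be an approximately concave function and let k ≥ 2 be a cache size such that k+1 lies in the range of f. Then there exists a constant c, depending only on f and k, such that for every page request sequence σ of length T conforming to f, the number of faults of the LRU policy with cache size k (starting from an empty cache) on σ is at most α_f(k)·T + c; in particular, LRU's fault rate on σ is at most α_f(k) = (k−1)/(f⁻¹(k+1)−2) plus an additive term that tends to 0 as T → ∞. -/

import Mathlib

/-- A page request sequence `σ` conforms to `f` if every window of `n` consecutive
requests contains requests for at most `f n` distinct pages. -/
def Conforms (f : ℕ → ℕ) (σ : List ℕ) : Prop :=
  ∀ w : List ℕ, w <:+: σ → w.toFinset.card ≤ f w.length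

/-- `f` is approximately concave: `f 1 = 1`, `f 2 = 2`, `f (n+1) ∈ {f n, f n + 1}`
for all `n ≥ 1`, and `m_y = |{n ≥ 1 : f n = y}|` is nondecreasing over attained values. -/
def ApproxConcave (f : ℕ → ℕ) : Prop :=
  f 1 = 1 ∧ f 2 = 2 ∧
    (∀ n, 1 ≤ n → f (n + 1) = f n ∨ f (n + 1) = f n + 1) ∧
    (∀ y z, (∃ n, 1 ≤ n ∧ f n = y) → (∃ n, 1 ≤ n ∧ f n = z) → y ≤ z →
      {n | 1 ≤ n ∧ f n = y}.encard ≤ {n | 1 ≤ n ∧ f n = z}.encard)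

/-- `fInv f y` is the smallest `x ≥ 1` with `f x = y`. -/
noncomputable def fInv (f : ℕ → ℕ) (y : ℕ) : ℕ := sInf {x | 1 ≤ x ∧ f x = y}

/-- `α_f(k) = (k - 1) / (f⁻¹(k+1) - 2)`. -/
noncomputable def alphaF (f : ℕ → ℕ) (k : ℕ) : ℝ :=
  ((k : ℝ) - 1) / ((fInv f (k + 1) : ℝ) - 2)

/-- One step of the LRU policy with cache size `k`.  The cache is maintained as a list
of (distinct) pages ordered by recency of their most recent request (most recent first);
on a request for `p`, page `p` is moved to the front, and if the cache overflows, the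
page whose most recent request lies furthest in the past (the last list entry) is evicted. -/
def lruStep (k : ℕ) (L : List ℕ) (p : ℕ) : List ℕ := (p :: L.erase p).take k

/-- The number of faults of the LRU policy with cache size `k` on a request sequence,
starting from the cache `L`.  A request is a fault when the page is not in the cache. -/
def lruFaults (k : ℕ) : List ℕ → List ℕ → ℕ
  | _, [] => 0
  | L, p :: rest => (if p ∈ L then 0 else 1) + lruFaults k (lruStep k L p) rest

/-- **Theorem 1.1(b)** For every approximately concave `f` and cache size `k ≥ 2` with
`k+1` in the range of `f`, there is a constant `c` (depending only on `f` and `k`) such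
that on every request sequence of length `T` conforming to `f`, LRU (from an empty cache)
incurs at most `α_f(k)·T + c` faults; hence its fault rate is at most `α_f(k)` plus an
additive term that vanishes as `T → ∞`. -/
def faultPages (k : ℕ) : List ℕ → List ℕ → List ℕ
  | _, [] => []
  | L, p :: rest => (if p ∈ L then ([] : List ℕ) else [p]) ++ faultPages k (lruStep k L p) rest

lemma lruStep_length (k : ℕ) (L : List ℕ) (p : ℕ) : (lruStep k L p).length ≤ k := by
  simp [lruStep]

lemma lruStep_nodup (k : ℕ) (L : List ℕ) (p : ℕ) (h : L.Nodup) : (lruStep k L p).Nodup := by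
  have h1 : (p :: L.erase p).Nodup := by
    refine List.nodup_cons.mpr ⟨?_, h.erase p⟩
    intro hc
    exact ((h.mem_erase_iff).mp hc).1 rfl
  exact List.Nodup.sublist (List.take_sublist _ _) h1

lemma mem_faultPages (k : ℕ) : ∀ (w L : List ℕ) (x : ℕ), x ∈ faultPages k L w → x ∈ w := by
  intro w
  induction w with
  | nil => intro L x h; simp [faultPages] at h
  | cons q w' ih =>
    intro L x h
    simp only [faultPages, List.mem_append] at h
    rcases h with h | h
    · split at h <;> simp_all
    · exact List.mem_cons_of_mem _ (ih _ _ h)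

lemma filter_cons_ne {q p : ℕ} (w : List ℕ) (hqp : q ≠ p) :
    (q :: w).filter (· ≠ p) = q :: w.filter (· ≠ p) := by
  simp [List.filter_cons, hqp]

lemma filter_cons_self {p : ℕ} (w : List ℕ) :
    (p :: w).filter (· ≠ p) = w.filter (· ≠ p) := by
  simp [List.filter_cons]

lemma evict_card (k p : ℕ) :
    ∀ (w A B : List ℕ), (A ++ p :: B).length ≤ k → (A ++ p :: B).Nodup →
      p ∈ faultPages k (A ++ p :: B) w →
      k ≤ (A.toFinset ∪ (w.filter (· ≠ p)).toFinset).card := by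
  intro w
  induction w with
  | nil => intro A B _ _ h; simp [faultPages] at h
  | cons q w' ih =>
    intro A B hlen hnd hmem
    have hpL : p ∈ A ++ p :: B := by simp
    have hlpos : 1 ≤ (A ++ p :: B).length := by simp; omega
    have hk1 : 1 ≤ k := le_trans hlpos hlen
    by_cases hqp : q = p
    · -- request is p itself: p moves to front
      replace hqp := hqp.symm
      subst hqp
      have hmem' : p ∈ faultPages k (lruStep k (A ++ p :: B) p) w' := by
        simpa [faultPages, hpL] using hmem
      obtain ⟨k', rfl⟩ : ∃ k', k = k' + 1 := ⟨k - 1, by omega⟩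
      have hstep : lruStep (k' + 1) (A ++ p :: B) p
          = [] ++ p :: ((A ++ p :: B).erase p).take k' := by
        simp [lruStep]
      rw [hstep] at hmem'
      have hnd' : (([] : List ℕ) ++ p :: ((A ++ p :: B).erase p).take k').Nodup := by
        refine List.nodup_cons.mpr ⟨?_, List.Nodup.sublist (List.take_sublist _ _) (hnd.erase p)⟩
        intro hc
        exact ((hnd.mem_erase_iff).mp (List.mem_of_mem_take hc)).1 rfl
      have hlen' : (([] : List ℕ) ++ p :: ((A ++ p :: B).erase p).take k').length ≤ k' + 1 := by
        simp [List.length_take]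
      have h1 := ih [] _ hlen' hnd' hmem'
      refine le_trans h1 (Finset.card_le_card ?_)
      rw [filter_cons_self]
      intro x hx
      simp only [List.toFinset_nil, Finset.empty_union, Finset.mem_union] at hx ⊢
      exact Or.inr hx
    · -- request q ≠ p
      have hpq : p ≠ q := fun h => hqp h.symm
      have hmem' : p ∈ faultPages k (lruStep k (A ++ p :: B) q) w' := by
        simp only [faultPages, List.mem_append] at hmem
        rcases hmem with h | h
        · split at h <;> simp_all
        · exact h
      -- generic finishing move
      have main : ∀ A'' B'' : List ℕ, lruStep k (A ++ p :: B) q = (q :: A'') ++ p :: B'' →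
          A''.toFinset ⊆ A.toFinset →
          k ≤ (A.toFinset ∪ ((q :: w').filter (· ≠ p)).toFinset).card := by
        intro A'' B'' hstep hsub
        have hlen'' : ((q :: A'') ++ p :: B'').length ≤ k := by
          rw [← hstep]; exact lruStep_length k _ q
        have hnd'' : ((q :: A'') ++ p :: B'').Nodup := by
          rw [← hstep]; exact lruStep_nodup k _ q hnd
        have h1 := ih (q :: A'') B'' hlen'' hnd'' (by rw [hstep] at hmem'; exact hmem')
        refine le_trans h1 (Finset.card_le_card ?_)
        rw [filter_cons_ne _ hqp]
        intro x hx
        simp only [Finset.mem_union, List.mem_toFinset, List.mem_cons] at hx ⊢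
        rcases hx with (rfl | hx) | hx
        · exact Or.inr (Or.inl rfl)
        · exact Or.inl (List.mem_toFinset.mp (hsub (List.mem_toFinset.mpr hx)))
        · exact Or.inr (Or.inr hx)
      by_cases hqA : q ∈ A
      · -- q is ahead of p
        obtain ⟨A₁, A₂, rfl⟩ := List.append_of_mem hqA
        have hq1 : q ∉ A₁ := by
          have hA : (A₁ ++ q :: A₂).Nodup :=
            List.Nodup.sublist (List.sublist_append_left _ _) hnd
          intro hc
          exact (List.nodup_append.mp hA).2.2 q hc q List.mem_cons_self rfl
        have hner : ((A₁ ++ q :: A₂) ++ p :: B).erase q = (A₁ ++ A₂) ++ p :: B := by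
          rw [List.erase_append_left _ hqA, List.erase_append_right _ hq1]
          simp [List.erase_cons]
        have h1 : (q :: ((A₁ ++ q :: A₂) ++ p :: B).erase q).length ≤ k := by
          have h2 := List.length_erase_of_mem (show q ∈ (A₁ ++ q :: A₂) ++ p :: B by simp)
          simp only [List.length_cons, h2]
          omega
        refine main (A₁ ++ A₂) B ?_ ?_
        · rw [lruStep, List.take_of_length_le h1, hner]; rfl
        · intro x hx; simp at hx ⊢; tauto
      · by_cases hqB : q ∈ B
        · -- q is behind p
          have hner : (A ++ p :: B).erase q = A ++ p :: B.erase q := by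
            rw [List.erase_append_right _ hqA]
            simp [List.erase_cons, hpq]
          have h1 : (q :: (A ++ p :: B).erase q).length ≤ k := by
            have h2 := List.length_erase_of_mem (show q ∈ A ++ p :: B by simp [hqB])
            simp only [List.length_cons, h2]
            omega
          refine main A (B.erase q) ?_ ?_
          · rw [lruStep, List.take_of_length_le h1, hner]; rfl
          · exact fun x hx => hx
        · -- q not in the cache
          have hqL : q ∉ A ++ p :: B := by
            simp only [List.mem_append, List.mem_cons]
            push_neg
            exact ⟨hqA, hqp, hqB⟩
          have hner : (A ++ p :: B).erase q = A ++ p :: B := List.erase_of_not_mem hqL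
          rcases lt_or_eq_of_le hlen with hlt | heq
          · have h1 : (q :: (A ++ p :: B).erase q).length ≤ k := by
              rw [hner]; simp only [List.length_cons]; omega
            refine main A B ?_ ?_
            · rw [lruStep, List.take_of_length_le h1, hner]; rfl
            · exact fun x hx => hx
          · rcases List.eq_nil_or_concat B with rfl | ⟨B₁, b, rfl⟩
            · -- p is the last element and gets evicted: conclude directly
              have hAlen : A.length + 1 = k := by simpa using heq
              have hcard : (insert q A.toFinset).card = k := by
                rw [Finset.card_insert_of_notMem (by simp [hqA]),
                  List.toFinset_card_of_nodup
                    (List.Nodup.sublist (List.sublist_append_left _ _) hnd)]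
                omega
              calc k = (insert q A.toFinset).card := hcard.symm
                _ ≤ _ := by
                  refine Finset.card_le_card ?_
                  rw [filter_cons_ne _ hqp]
                  intro x hx
                  simp only [Finset.mem_insert, List.mem_toFinset] at hx
                  simp only [Finset.mem_union, List.mem_toFinset, List.mem_cons]
                  rcases hx with rfl | hx
                  · exact Or.inr (Or.inl rfl)
                  · exact Or.inl hx
            · -- the last element of B₁ ++ [b] is evicted
              have hsplit : q :: (A ++ p :: B₁.concat b) = ((q :: A) ++ p :: B₁) ++ [b] := by
                simp [List.concat_eq_append]
              have hlen1 : ((q :: A) ++ p :: B₁).length = k := by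
                have := heq
                simp [List.concat_eq_append] at this ⊢
                omega
              refine main A B₁ ?_ ?_
              · rw [lruStep, hner, hsplit, List.take_left' hlen1]
              · exact fun x hx => hx


lemma lruFaults_eq_length (k : ℕ) :
    ∀ (w L : List ℕ), lruFaults k L w = (faultPages k L w).length := by
  intro w
  induction w with
  | nil => intro L; simp [lruFaults, faultPages]
  | cons q w' ih =>
    intro L
    simp only [lruFaults, faultPages, List.length_append, ih]
    split <;> simp

lemma filter_ne_subset_erase (q : ℕ) (w : List ℕ) :
    (w.filter (· ≠ q)).toFinset ⊆ (q :: w).toFinset.erase q := by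
  intro x hx
  simp only [List.mem_toFinset, List.mem_filter, decide_eq_true_eq] at hx
  simp only [Finset.mem_erase, List.mem_toFinset, List.mem_cons]
  exact ⟨hx.2, Or.inr hx.1⟩

lemma faultPages_nodup (k : ℕ) :
    ∀ (w L : List ℕ), L.Nodup → L.length ≤ k → w.toFinset.card ≤ k →
      (faultPages k L w).Nodup := by
  intro w
  induction w with
  | nil => intro L _ _ _; simp [faultPages]
  | cons q w' ih =>
    intro L hnd hlen hcard
    have hk1 : 1 ≤ k := le_trans (Finset.card_pos.mpr ⟨q, by simp⟩) hcard
    have hcard' : w'.toFinset.card ≤ k :=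
      le_trans (Finset.card_le_card (by intro x hx; simp at hx ⊢; exact Or.inr hx)) hcard
    have ihL' := ih (lruStep k L q) (lruStep_nodup k L q hnd) (lruStep_length k L q) hcard'
    by_cases hq : q ∈ L
    · simpa [faultPages, hq] using ihL'
    · have hstep : lruStep k L q = [] ++ q :: L.take (k - 1) := by
        obtain ⟨k', rfl⟩ : ∃ k', k = k' + 1 := ⟨k - 1, by omega⟩
        simp [lruStep, List.erase_of_not_mem hq]
      have hqF : q ∉ faultPages k (lruStep k L q) w' := by
        intro hc
        rw [hstep] at hc
        have hlen' : (([] : List ℕ) ++ q :: L.take (k - 1)).length ≤ k := by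
          simp [List.length_take]; omega
        have hnd' : (([] : List ℕ) ++ q :: L.take (k - 1)).Nodup := by
          refine List.nodup_cons.mpr ⟨fun hc2 => hq (List.mem_of_mem_take hc2),
            List.Nodup.sublist (List.take_sublist _ _) hnd⟩
        have h1 := evict_card k q w' [] (L.take (k - 1)) hlen' hnd' hc
        have h2 : ((w'.filter (· ≠ q)).toFinset).card ≤ k - 1 := by
          have h3 := Finset.card_le_card (filter_ne_subset_erase q w')
          rw [Finset.card_erase_of_mem (by simp)] at h3
          exact le_trans h3 (Nat.sub_le_sub_right hcard 1)
        simp only [List.toFinset_nil, Finset.empty_union] at h1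
        have := le_trans h1 h2
        omega
      simp only [faultPages, if_neg hq, List.singleton_append, List.nodup_cons]
      exact ⟨hqF, ihL'⟩

lemma lruFaults_le_card (k : ℕ) (L w : List ℕ) (hnd : L.Nodup) (hlen : L.length ≤ k)
    (hcard : w.toFinset.card ≤ k) : lruFaults k L w ≤ w.toFinset.card := by
  rw [lruFaults_eq_length]
  have hnodup := faultPages_nodup k w L hnd hlen hcard
  rw [← List.toFinset_card_of_nodup hnodup]
  exact Finset.card_le_card (fun x hx => by
    simp only [List.mem_toFinset] at hx ⊢
    exact mem_faultPages k w L x hx)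

lemma chunk_bound (k : ℕ) (q : ℕ) (B w : List ℕ) (hnd : (q :: B).Nodup)
    (hlen : (q :: B).length ≤ k) (hcard : ((q :: w).toFinset).card ≤ k) :
    lruFaults k (q :: B) w ≤ k - 1 := by
  have hwcard : w.toFinset.card ≤ k :=
    le_trans (Finset.card_le_card (by intro x hx; simp at hx ⊢; exact Or.inr hx)) hcard
  have hnodup := faultPages_nodup k w (q :: B) hnd hlen hwcard
  have hqF : q ∉ faultPages k (q :: B) w := by
    intro hc
    have h1 := evict_card k q w [] B (by simpa using hlen) (by simpa using hnd)
      (by simpa using hc)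
    have h2 : ((w.filter (· ≠ q)).toFinset).card ≤ k - 1 := by
      have h3 := Finset.card_le_card (filter_ne_subset_erase q w)
      rw [Finset.card_erase_of_mem (by simp)] at h3
      exact le_trans h3 (Nat.sub_le_sub_right hcard 1)
    simp only [List.toFinset_nil, Finset.empty_union] at h1
    have hk1 : 1 ≤ k := le_trans (by simp) hlen
    have := le_trans h1 h2
    omega
  rw [lruFaults_eq_length, ← List.toFinset_card_of_nodup hnodup]
  have hsub : (faultPages k (q :: B) w).toFinset ⊆ (q :: w).toFinset.erase q := by
    intro x hx
    simp only [List.mem_toFinset] at hx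
    simp only [Finset.mem_erase, List.mem_toFinset, List.mem_cons]
    exact ⟨fun h => hqF (h ▸ hx), Or.inr (mem_faultPages k w _ x hx)⟩
  have h5 := Finset.card_le_card hsub
  rw [Finset.card_erase_of_mem (by simp)] at h5
  exact le_trans h5 (Nat.sub_le_sub_right hcard 1)


lemma lruFaults_append (k : ℕ) :
    ∀ (u L v : List ℕ),
      lruFaults k L (u ++ v) = lruFaults k L u + lruFaults k (u.foldl (lruStep k) L) v := by
  intro u
  induction u with
  | nil => intro L v; simp [lruFaults]
  | cons q u' ih =>
    intro L v
    simp only [List.cons_append, lruFaults, List.foldl_cons, List.append_eq, ih]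
    omega

lemma foldl_nodup (k : ℕ) : ∀ (u L : List ℕ), L.Nodup → (u.foldl (lruStep k) L).Nodup := by
  intro u
  induction u with
  | nil => intro L h; simpa using h
  | cons q u' ih => intro L h; simpa using ih _ (lruStep_nodup k L q h)

lemma foldl_length (k : ℕ) (hk : 1 ≤ k) :
    ∀ (u L : List ℕ), L.length ≤ k → (u.foldl (lruStep k) L).length ≤ k := by
  intro u
  induction u with
  | nil => intro L h; simpa using h
  | cons q u' ih => intro L _; simpa using ih _ (lruStep_length k L q)

lemma foldl_concat_head (k : ℕ) (hk : 1 ≤ k) (u : List ℕ) (q : ℕ) (L : List ℕ) :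
    ∃ B, (u ++ [q]).foldl (lruStep k) L = q :: B := by
  obtain ⟨k', rfl⟩ : ∃ k', k = k' + 1 := ⟨k - 1, by omega⟩
  refine ⟨((u.foldl (lruStep (k' + 1)) L).erase q).take k', ?_⟩
  rw [List.foldl_append]
  simp [lruStep]

lemma conforms_infix {f : ℕ → ℕ} {σ t : List ℕ} (h : Conforms f σ) (ht : t <:+: σ) :
    Conforms f t := fun w hw => h w (hw.trans ht)

lemma main_ind (f : ℕ → ℕ) (k l : ℕ) (hk1 : 1 ≤ k) (hl1 : 1 ≤ l)
    (hfb : ∀ n, 1 ≤ n → n ≤ l + 1 → f n ≤ k) :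
    ∀ (n : ℕ) (rest : List ℕ) (q : ℕ) (B : List ℕ), (q :: B).Nodup → (q :: B).length ≤ k →
      Conforms f (q :: rest) → rest.length ≤ n * l →
      lruFaults k (q :: B) rest ≤ (k - 1) * n := by
  intro n
  induction n with
  | zero =>
    intro rest q B _ _ _ hlen
    have : rest = [] := List.length_eq_zero_iff.mp (by omega)
    subst this
    simp [lruFaults]
  | succ n ihn =>
    intro rest q B hnd hlen hconf hrl
    have hfaults := lruFaults_append k (rest.take l) (q :: B) (rest.drop l)
    rw [List.take_append_drop] at hfaults
    have hcard : ((q :: rest.take l).toFinset).card ≤ k := by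
      have hinf : (q :: rest.take l) <:+: (q :: rest) :=
        ⟨[], rest.drop l, by simp [List.take_append_drop]⟩
      refine le_trans (hconf _ hinf) (hfb _ (by simp) ?_)
      simp only [List.length_cons, List.length_take]
      omega
    have h1 : lruFaults k (q :: B) (rest.take l) ≤ k - 1 :=
      chunk_bound k q B _ hnd hlen hcard
    by_cases hre : rest.length ≤ l
    · have hdrop : rest.drop l = [] := List.drop_eq_nil_of_le hre
      rw [hfaults, hdrop]
      have : lruFaults k ((rest.take l).foldl (lruStep k) (q :: B)) [] = 0 := by
        simp [lruFaults]
      rw [this]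
      have h2 : (k - 1) * 1 ≤ (k - 1) * (n + 1) := Nat.mul_le_mul_left _ (by omega)
      simpa using le_trans (by simpa using h1) h2
    · push_neg at hre
      have hwlen : (rest.take l).length = l := by
        simp only [List.length_take]
        omega
      rcases List.eq_nil_or_concat (rest.take l) with hnil | ⟨w₁, q', heqw⟩
      · rw [hnil] at hwlen; simp at hwlen; omega
      · obtain ⟨B', hB'⟩ := foldl_concat_head k hk1 w₁ q' (q :: B)
        have hfold : (rest.take l).foldl (lruStep k) (q :: B) = q' :: B' := by
          rw [heqw, List.concat_eq_append, hB']
        have hnd' : (q' :: B').Nodup := by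
          rw [← hfold]; exact foldl_nodup k _ _ hnd
        have hlen2 : (q' :: B').length ≤ k := by
          rw [← hfold]; exact foldl_length k hk1 _ _ hlen
        have hinf2 : (q' :: rest.drop l) <:+: (q :: rest) := by
          refine ⟨q :: w₁, [], ?_⟩
          have : rest = (w₁ ++ [q']) ++ rest.drop l := by
            rw [← List.concat_eq_append, ← heqw, List.take_append_drop]
          conv_rhs => rw [this]
          simp
        have hconf' := conforms_infix hconf hinf2
        have hlen' : (rest.drop l).length ≤ n * l := by
          rw [List.length_drop]
          have h := Nat.sub_le_sub_right hrl l
          rwa [Nat.succ_mul, Nat.add_sub_cancel] at h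
        have h2 := ihn (rest.drop l) q' B' hnd' hlen2 hconf' hlen'
        rw [hfaults, hfold]
        exact le_trans (Nat.add_le_add h1 h2)
          (le_of_eq (by rw [Nat.mul_succ, Nat.add_comm]))

theorem stmt1 (f : ℕ → ℕ) (hf : ApproxConcave f) (k : ℕ) (hk : 2 ≤ k)
    (hrange : ∃ n, 1 ≤ n ∧ f n = k + 1) :
    ∃ c : ℝ, ∀ σ : List ℕ, Conforms f σ →
      (lruFaults k [] σ : ℝ) ≤ alphaF f k * (σ.length : ℝ) + c := by
  obtain ⟨hf1, hf2, hf3, -⟩ := hf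
  have hk1 : 1 ≤ k := by omega
  have hmono : ∀ a b, 1 ≤ a → a ≤ b → f a ≤ f b := by
    intro a b ha hab
    induction b, hab using Nat.le_induction with
    | base => exact le_refl _
    | succ b hb ih => rcases hf3 b (le_trans ha hb) with h | h <;> omega
  have hmem : 1 ≤ fInv f (k + 1) ∧ f (fInv f (k + 1)) = k + 1 := Nat.sInf_mem hrange
  set m := fInv f (k + 1) with hm
  have hm3 : 3 ≤ m := by
    by_contra hc
    push_neg at hc
    have : m = 1 ∨ m = 2 := by omega
    rcases this with h | h <;> rw [h] at hmem <;> omega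
  set l := m - 2 with hl
  have hl1 : 1 ≤ l := by omega
  have hfb : ∀ n, 1 ≤ n → n ≤ l + 1 → f n ≤ k := by
    intro n hn1 hn2
    have h1 : f n ≤ f (m - 1) := hmono n (m - 1) hn1 (by omega)
    have h2 : f (m - 1) ≤ f m := hmono _ _ (by omega) (by omega)
    have h3 : f (m - 1) ≠ k + 1 := by
      intro hc
      have : m ≤ m - 1 := Nat.sInf_le ⟨by omega, hc⟩
      omega
    omega
  -- alphaF in terms of l
  have hlR : (0 : ℝ) < ((l : ℕ) : ℝ) := by exact_mod_cast hl1
  have hαeq : alphaF f k = ((k : ℝ) - 1) / ((l : ℕ) : ℝ) := by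
    rw [alphaF, ← hm]
    congr 1
    rw [hl, Nat.cast_sub (by omega : 2 ≤ m)]
    norm_num
  have hα0 : 0 ≤ alphaF f k := by
    rw [hαeq]
    apply div_nonneg _ (le_of_lt hlR)
    have : (2 : ℝ) ≤ (k : ℝ) := by exact_mod_cast hk
    linarith
  refine ⟨2 * k, ?_⟩
  intro σ hconf
  have hT0 : 0 ≤ alphaF f k * (σ.length : ℝ) := by positivity
  by_cases hσ : σ = []
  · subst hσ
    simp only [lruFaults, List.length_nil, Nat.cast_zero, mul_zero, zero_add, Nat.cast_ofNat]
    positivity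
  · have hσ1 : 1 ≤ σ.length := List.length_pos_iff.mpr hσ
    have hfs := lruFaults_append k (σ.take l) [] (σ.drop l)
    rw [List.take_append_drop] at hfs
    have htlen1 : 1 ≤ (σ.take l).length := by
      simp only [List.length_take]
      omega
    have htlen2 : (σ.take l).length ≤ l := by
      simp only [List.length_take]
      omega
    have hcard1 : (σ.take l).toFinset.card ≤ k :=
      le_trans (hconf _ ⟨[], σ.drop l, by simp [List.take_append_drop]⟩)
        (hfb _ htlen1 (by omega))
    have hF1 : lruFaults k [] (σ.take l) ≤ k :=
      le_trans (lruFaults_le_card k [] _ (by simp) (by simp) hcard1) hcard1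
    by_cases hd : σ.drop l = []
    · rw [hfs, hd]
      have h0 : lruFaults k ((σ.take l).foldl (lruStep k) []) [] = 0 := by simp [lruFaults]
      rw [h0]
      have : (↑(lruFaults k [] (σ.take l) + 0) : ℝ) ≤ (k : ℝ) := by
        push_cast
        exact_mod_cast by simpa using hF1
      refine le_trans this ?_
      have : (k : ℝ) ≤ 2 * k := by
        have : (0 : ℝ) ≤ (k : ℝ) := by positivity
        linarith
      linarith
    · have hdl : l < σ.length := by
        by_contra h
        push_neg at h
        exact hd (List.drop_eq_nil_of_le h)
      have htl : (σ.take l).length = l := by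
        simp only [List.length_take]
        omega
      rcases List.eq_nil_or_concat (σ.take l) with hnil | ⟨w₁, q, heqw⟩
      · rw [hnil] at htl; simp at htl; omega
      obtain ⟨B, hB⟩ := foldl_concat_head k hk1 w₁ q []
      have hfold : (σ.take l).foldl (lruStep k) [] = q :: B := by
        rw [heqw, List.concat_eq_append, hB]
      have hnd : (q :: B).Nodup := by
        rw [← hfold]; exact foldl_nodup k _ _ (by simp)
      have hlenqB : (q :: B).length ≤ k := by
        rw [← hfold]; exact foldl_length k hk1 _ _ (by simp)
      have hinf : (q :: σ.drop l) <:+: σ := by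
        refine ⟨w₁, [], ?_⟩
        conv_rhs => rw [show σ = σ.take l ++ σ.drop l from (List.take_append_drop l σ).symm]
        rw [heqw]
        simp [List.concat_eq_append]
      have hconf' := conforms_infix hconf hinf
      have hdn : (σ.drop l).length ≤ ((σ.drop l).length / l + 1) * l := by
        calc (σ.drop l).length
            = l * ((σ.drop l).length / l) + (σ.drop l).length % l :=
              (Nat.div_add_mod _ _).symm
          _ ≤ l * ((σ.drop l).length / l) + l :=
              Nat.add_le_add_left (le_of_lt (Nat.mod_lt _ (by omega))) _
          _ = ((σ.drop l).length / l + 1) * l := by ring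
      have hF2 := main_ind f k l hk1 hl1 hfb ((σ.drop l).length / l + 1) (σ.drop l) q B
        hnd hlenqB hconf' hdn
      rw [hfs, hfold]
      -- real arithmetic
      have hdivle : ((σ.drop l).length / l) * l ≤ σ.length :=
        le_trans (Nat.div_mul_le_self _ _) (by rw [List.length_drop]; omega)
      have hdivR : (((σ.drop l).length / l : ℕ) : ℝ) ≤ (σ.length : ℝ) / ((l : ℕ) : ℝ) := by
        rw [le_div_iff₀ hlR]
        exact_mod_cast hdivle
      have hnat : lruFaults k [] (σ.take l) + lruFaults k (q :: B) (σ.drop l)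
          ≤ k + (k - 1) * ((σ.drop l).length / l + 1) := Nat.add_le_add hF1 hF2
      have hcast : (↑(lruFaults k [] (σ.take l) + lruFaults k (q :: B) (σ.drop l)) : ℝ)
          ≤ (k : ℝ) + ((k : ℝ) - 1) * ((((σ.drop l).length / l : ℕ) : ℝ) + 1) := by
        have := (Nat.cast_le (α := ℝ)).mpr hnat
        push_cast [Nat.cast_sub hk1] at this
        push_cast
        exact this
      refine le_trans hcast ?_
      have hk2R : (0 : ℝ) ≤ (k : ℝ) - 1 := by
        have : (2 : ℝ) ≤ (k : ℝ) := by exact_mod_cast hk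
        linarith
      have h9 : ((k : ℝ) - 1) * (((σ.drop l).length / l : ℕ) : ℝ)
          ≤ ((k : ℝ) - 1) * ((σ.length : ℝ) / ((l : ℕ) : ℝ)) :=
        mul_le_mul_of_nonneg_left hdivR hk2R
      have hαT : alphaF f k * (σ.length : ℝ)
          = ((k : ℝ) - 1) * ((σ.length : ℝ) / ((l : ℕ) : ℝ)) := by
        rw [hαeq]; ring
      rw [hαT]
      push_cast
      linarith
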